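/- Let a_{n,j} denote the number of Carlitz compositions of n having no part equal to j. For every fixed positive integer j, the ordinary generating function of the sequence (a_{n,j})_{n≥0} satisfies C_j(z) = 1/(1-σ_j(z)); equivalently, as an identity of formal power series, (1 - σ_j(X)) · ∑_{n≥0} a_{n,j} X^n = 1, where σ_j(X) = ∑_{ℓ≥1} (-1)^{ℓ-1} ( X^ℓ/(1-X^ℓ) - X^{ℓj} ) and X^ℓ/(1-X^ℓ) denotes the formal power series ∑_{m≥1} X^{ℓm}. -/

import Mathlib

/-- A list of natural numbers is a composition of `n` if all its entries are
positive and they sum to `n`. -/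
def IsComposition (n : ℕ) (L : List ℕ) : Prop :=
  (∀ x ∈ L, 0 < x) ∧ L.sum = n

/-- A composition is Carlitz if adjacent parts are different. -/
def IsCarlitz (L : List ℕ) : Prop :=
  L.Chain' (· ≠ ·)

/-- `carlitzCountAvoid n j` is the number of Carlitz compositions of `n`
having no part equal to `j`.  (For `n = 0` this equals `1`, counting the
empty composition.) -/
noncomputable def carlitzCountAvoid (n j : ℕ) : ℕ :=
  Nat.card {L : List ℕ // IsComposition n L ∧ IsCarlitz L ∧ j ∉ L}

namespace CarlitzAux

open Finset

def CSet (j n : ℕ) : Set (List ℕ) :=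
  {L | IsComposition n L ∧ IsCarlitz L ∧ j ∉ L}

lemma finite_CSet (j n : ℕ) : (CSet j n).Finite := by
  rw [← Set.finite_coe_iff]
  refine Finite.of_injective (fun L => (⟨L.1, fun {i} hi => L.2.1.1 i hi, L.2.1.2⟩ : Composition n))
    (fun L1 L2 h => ?_)
  apply Subtype.ext
  exact congrArg Composition.blocks h

noncomputable def CF (j n : ℕ) : Finset (List ℕ) := (finite_CSet j n).toFinset

lemma mem_CF {j n : ℕ} {L : List ℕ} :
    L ∈ CF j n ↔ (∀ x ∈ L, 0 < x) ∧ L.sum = n ∧ L.Chain' (· ≠ ·) ∧ j ∉ L := by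
  simp only [CF, Set.Finite.mem_toFinset, CSet, Set.mem_setOf_eq, IsComposition, IsCarlitz]
  tauto

noncomputable def a (j n : ℕ) : ℕ := (CF j n).card

noncomputable def b (j m n : ℕ) : ℕ :=
  ((CF j n).filter (fun L => L.head? = some m)).card

lemma carlitzCountAvoid_eq (j n : ℕ) : carlitzCountAvoid n j = a j n := by
  rw [carlitzCountAvoid, a, CF, ← Set.ncard_eq_toFinset_card (CSet j n) (finite_CSet j n),
    ← Nat.card_coe_set_eq]
  rfl

lemma a_zero (j : ℕ) : a j 0 = 1 := by
  have : CF j 0 = {([] : List ℕ)} := by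
    ext L
    simp only [mem_CF, Finset.mem_singleton]
    constructor
    · rintro ⟨hpos, hsum, -, -⟩
      cases L with
      | nil => rfl
      | cons x t =>
        exfalso
        have hx := hpos x (by simp)
        have : x ≤ 0 := by
          have : x + t.sum = 0 := by simpa using hsum
          omega
        omega
    · rintro rfl; simp [IsCarlitz, List.Chain']
  rw [a, this]; rfl

lemma b_j_eq_zero (j n : ℕ) : b j j n = 0 := by
  rw [b, Finset.card_eq_zero, Finset.filter_eq_empty_iff]
  intro L hL hhead
  exact (mem_CF.mp hL).2.2.2 (List.mem_of_mem_head? hhead)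

lemma a_eq_sum_b (j n : ℕ) (hn : 1 ≤ n) : a j n = ∑ m ∈ Icc 1 n, b j m n := by
  have hne : ∀ L ∈ CF j n, L ≠ [] := by
    intro L hL h
    rw [mem_CF] at hL
    subst h
    simp at hL
    omega
  have key : ∀ L ∈ CF j n, L.headI ∈ Icc 1 n := by
    intro L hL
    have hne' := hne L hL
    rw [mem_CF] at hL
    have hmem : L.headI ∈ L := by
      cases L with
      | nil => simp at hne'
      | cons x t => simp
    have h1 : 0 < L.headI := hL.1 _ hmem
    have h2 : L.headI ≤ L.sum := List.single_le_sum (fun x hx => Nat.zero_le x) _ hmem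
    rw [hL.2.1] at h2
    exact Finset.mem_Icc.mpr ⟨h1, h2⟩
  rw [a, Finset.card_eq_sum_card_fiberwise key]
  refine Finset.sum_congr rfl fun m hm => ?_
  rw [b]
  congr 1
  apply Finset.filter_congr
  intro L hL
  have := hne L hL
  cases L with
  | nil => simp at this
  | cons x t => simp

lemma b_rec (j m n : ℕ) (hm1 : 1 ≤ m) (hmn : m ≤ n) (hmj : m ≠ j) :
    b j m n = ((CF j (n - m)).filter (fun L => ¬ L.head? = some m)).card := by
  rw [b]
  apply Finset.card_bij' (fun L _ => L.tail) (fun L _ => m :: L)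
  · intro L hL
    rw [Finset.mem_filter] at hL
    obtain ⟨hL, hh⟩ := hL
    rw [mem_CF] at hL
    obtain ⟨hpos, hsum, hch, hj⟩ := hL
    cases L with
    | nil => simp at hh
    | cons x t =>
      simp only [List.head?_cons, Option.some.injEq] at hh
      subst hh
      simp only [List.tail_cons]
      rw [Finset.mem_filter, mem_CF]
      rw [List.sum_cons] at hsum
      simp only [List.Chain', List.isChain_cons] at hch
      refine ⟨⟨fun y hy => hpos y (List.mem_cons_of_mem _ hy), by omega,
        hch.2, fun h => hj (List.mem_cons_of_mem _ h)⟩, fun h => ?_⟩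
      exact hch.1 _ h rfl
  · intro L' hL'
    rw [Finset.mem_filter] at hL'
    obtain ⟨hL', hh⟩ := hL'
    rw [mem_CF] at hL'
    obtain ⟨hpos, hsum, hch, hj⟩ := hL'
    rw [Finset.mem_filter, mem_CF]
    refine ⟨⟨?_, ?_, ?_, ?_⟩, rfl⟩
    · intro y hy
      rcases List.mem_cons.mp hy with rfl | hy
      · omega
      · exact hpos y hy
    · rw [List.sum_cons, hsum]; omega
    · simp only [List.Chain', List.isChain_cons]
      exact ⟨fun y hy hmy => hh (by rw [hmy]; exact Option.mem_def.mp hy), hch⟩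
    · intro h
      rcases List.mem_cons.mp h with h | h
      · exact hmj h.symm
      · exact hj h
  · intro L hL
    rw [Finset.mem_filter] at hL
    exact List.cons_head?_tail hL.2
  · intro L' _
    rfl

lemma b_rec' (j m n : ℕ) (hm1 : 1 ≤ m) (hmn : m ≤ n) (hmj : m ≠ j) :
    b j m n + b j m (n - m) = a j (n - m) := by
  rw [b_rec j m n hm1 hmn hmj, Nat.add_comm, b, a]
  exact Finset.card_filter_add_card_filter_not _

lemma b_eq_zero_of_lt (j m n : ℕ) (h : n < m) : b j m n = 0 := by
  rw [b, Finset.card_eq_zero, Finset.filter_eq_empty_iff]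
  intro L hL hh
  rw [mem_CF] at hL
  have hmem : m ∈ L := List.mem_of_mem_head? hh
  have : m ≤ L.sum := List.single_le_sum (fun x _ => Nat.zero_le x) _ hmem
  omega

lemma b_closed (j m : ℕ) (hm1 : 1 ≤ m) (hmj : m ≠ j) : ∀ n,
    (b j m n : ℤ) = ∑ ℓ ∈ Icc 1 (n / m), (-1 : ℤ) ^ (ℓ - 1) * a j (n - ℓ * m) := by
  intro n
  induction n using Nat.strong_induction_on with
  | _ n ih =>
    by_cases hmn : m ≤ n
    · have hrec := b_rec' j m n hm1 hmn hmj
      have ihm := ih (n - m) (by omega)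
      have hdiv : n / m = (n - m) / m + 1 := Nat.div_eq_sub_div (by omega) hmn
      have hb : (b j m n : ℤ) = (a j (n - m) : ℤ) - b j m (n - m) := by
        have := congrArg (Nat.cast : ℕ → ℤ) hrec
        push_cast at this
        linarith
      rw [hb, ihm, hdiv]
      set k := (n - m) / m with hk
      rw [← Finset.Ico_add_one_right_eq_Icc, Finset.sum_Ico_eq_sum_range,
        ← Finset.Ico_add_one_right_eq_Icc, Finset.sum_Ico_eq_sum_range]
      rw [show k + 1 + 1 - 1 = k + 1 from rfl, show k + 1 - 1 = k from rfl]
      rw [Finset.sum_range_succ' (fun i => (-1:ℤ)^((1+i)-1) * (a j (n - (1+i)*m) : ℤ)) k]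
      have hcongr : ∀ i ∈ Finset.range k,
          (-1:ℤ)^((1+(i+1))-1) * (a j (n-(1+(i+1))*m) : ℤ)
            = -((-1:ℤ)^((1+i)-1) * (a j (n-m-(1+i)*m) : ℤ)) := by
        intro i _
        have harg : n - (1 + (i+1)) * m = n - m - (1+i)*m := by
          rw [Nat.sub_sub]
          congr 1
          ring
        rw [harg]
        have h1 : 1 + (i + 1) - 1 = (1 + i - 1) + 1 := by omega
        rw [h1, pow_succ]
        ring
      rw [Finset.sum_congr rfl hcongr, Finset.sum_neg_distrib]
      simp only [Nat.add_zero, pow_zero, one_mul, Nat.one_mul]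
      ring
    · rw [b_eq_zero_of_lt j m n (by omega), Nat.div_eq_of_lt (by omega)]
      simp

lemma helperB (n x : ℕ) (hx : 1 ≤ x) (g : ℕ → ℤ) :
    ∑ y ∈ Icc 1 (n / x), g y = ∑ y ∈ Icc 1 n, (if x * y ≤ n then g y else 0) := by
  rw [← Finset.sum_filter]
  congr 1
  ext y
  simp only [Finset.mem_filter, Finset.mem_Icc]
  constructor
  · rintro ⟨h1, h2⟩
    have hxy : x * y ≤ n := by
      rw [Nat.mul_comm]
      exact (Nat.le_div_iff_mul_le (by omega)).mp h2
    exact ⟨⟨h1, le_trans (Nat.le_mul_of_pos_left y (by omega)) hxy⟩, hxy⟩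
  · rintro ⟨⟨h1, _⟩, h3⟩
    exact ⟨h1, (Nat.le_div_iff_mul_le (by omega)).mpr (by rw [Nat.mul_comm]; omega : y * x ≤ n)⟩

lemma helperA (n ℓ : ℕ) (hℓ : 1 ≤ ℓ) (f : ℕ → ℤ) :
    ∑ k ∈ Icc 1 n, (if ℓ ∣ k then f k else 0) = ∑ m ∈ Icc 1 (n / ℓ), f (ℓ * m) := by
  rw [← Finset.sum_filter]
  apply Finset.sum_bij' (fun k _ => k / ℓ) (fun m _ => ℓ * m)
  · intro k hk
    simp only [Finset.mem_filter, Finset.mem_Icc] at hk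
    obtain ⟨⟨h1, h2⟩, hd⟩ := hk
    simp only [Finset.mem_Icc]
    constructor
    · exact (Nat.one_le_div_iff (by omega)).mpr (Nat.le_of_dvd (by omega) hd)
    · exact Nat.div_le_div_right h2
  · intro m hm
    simp only [Finset.mem_Icc] at hm
    simp only [Finset.mem_filter, Finset.mem_Icc]
    have : ℓ * m ≤ n := by
      rw [Nat.mul_comm]
      exact (Nat.le_div_iff_mul_le (by omega)).mp hm.2
    exact ⟨⟨by nlinarith [hm.1], this⟩, Dvd.intro m rfl⟩
  · intro k hk
    simp only [Finset.mem_filter] at hk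
    exact Nat.mul_div_cancel' hk.2
  · intro m _
    exact Nat.mul_div_cancel_left m (by omega)
  · intro k hk
    simp only [Finset.mem_filter] at hk
    rw [Nat.mul_div_cancel' hk.2]

lemma key (j : ℕ) (hj : 1 ≤ j) (n : ℕ) (hn : 1 ≤ n) :
    ∑ k ∈ Icc 1 n,
      (∑ ℓ ∈ Icc 1 k, (-1:ℤ)^(ℓ-1) *
        ((if ℓ ∣ k then (1:ℤ) else 0) - (if ℓ * j = k then (1:ℤ) else 0))) * (a j (n - k) : ℤ)
      = (a j n : ℤ) := by
  have step1 : ∀ k, (∑ ℓ ∈ Icc 1 k, (-1:ℤ)^(ℓ-1) *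
        ((if ℓ ∣ k then (1:ℤ) else 0) - (if ℓ * j = k then (1:ℤ) else 0))) * (a j (n - k) : ℤ)
      = (∑ ℓ ∈ Icc 1 k, (-1:ℤ)^(ℓ-1) * (if ℓ ∣ k then (a j (n-k):ℤ) else 0))
        - (∑ ℓ ∈ Icc 1 k, (-1:ℤ)^(ℓ-1) * (if ℓ * j = k then (a j (n-k):ℤ) else 0)) := by
    intro k
    rw [Finset.sum_mul, ← Finset.sum_sub_distrib]
    refine Finset.sum_congr rfl fun ℓ _ => ?_
    by_cases h1 : ℓ ∣ k <;> by_cases h2 : ℓ * j = k <;> simp [h1, h2]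
  rw [Finset.sum_congr rfl (fun k _ => step1 k), Finset.sum_sub_distrib]
  have ext1 : ∀ k ∈ Icc 1 n,
      (∑ ℓ ∈ Icc 1 k, (-1:ℤ)^(ℓ-1) * (if ℓ ∣ k then (a j (n-k):ℤ) else 0))
      = ∑ ℓ ∈ Icc 1 n, (-1:ℤ)^(ℓ-1) * (if ℓ ∣ k then (a j (n-k):ℤ) else 0) := by
    intro k hk
    rw [Finset.mem_Icc] at hk
    refine Finset.sum_subset (Finset.Icc_subset_Icc_right hk.2) ?_
    intro ℓ hℓ hℓk
    rw [Finset.mem_Icc] at hℓ hℓk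
    have : ¬ ℓ ∣ k := fun hd => hℓk ⟨hℓ.1, Nat.le_of_dvd (by omega) hd⟩
    simp [this]
  have ext2 : ∀ k ∈ Icc 1 n,
      (∑ ℓ ∈ Icc 1 k, (-1:ℤ)^(ℓ-1) * (if ℓ * j = k then (a j (n-k):ℤ) else 0))
      = ∑ ℓ ∈ Icc 1 n, (-1:ℤ)^(ℓ-1) * (if ℓ * j = k then (a j (n-k):ℤ) else 0) := by
    intro k hk
    rw [Finset.mem_Icc] at hk
    refine Finset.sum_subset (Finset.Icc_subset_Icc_right hk.2) ?_
    intro ℓ hℓ hℓk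
    rw [Finset.mem_Icc] at hℓ hℓk
    have : ¬ ℓ * j = k := by
      intro hd
      exact hℓk ⟨hℓ.1, by nlinarith [hℓ.1, hj]⟩
    simp [this]
  rw [Finset.sum_congr rfl ext1, Finset.sum_congr rfl ext2,
    Finset.sum_comm (s := Icc 1 n) (t := Icc 1 n)
      (f := fun k ℓ => (-1:ℤ)^(ℓ-1) * if ℓ ∣ k then (a j (n-k):ℤ) else 0),
    Finset.sum_comm (s := Icc 1 n) (t := Icc 1 n)
      (f := fun k ℓ => (-1:ℤ)^(ℓ-1) * if ℓ * j = k then (a j (n-k):ℤ) else 0)]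
  have hT1 : (∑ ℓ ∈ Icc 1 n, ∑ k ∈ Icc 1 n, (-1:ℤ)^(ℓ-1) * (if ℓ ∣ k then (a j (n-k):ℤ) else 0))
      = ∑ m ∈ Icc 1 n, ∑ ℓ ∈ Icc 1 (n / m), (-1:ℤ)^(ℓ-1) * (a j (n - ℓ*m) : ℤ) := by
    have h1 : ∀ ℓ ∈ Icc 1 n,
        (∑ k ∈ Icc 1 n, (-1:ℤ)^(ℓ-1) * (if ℓ ∣ k then (a j (n-k):ℤ) else 0))
        = ∑ m ∈ Icc 1 n, (if ℓ * m ≤ n then (-1:ℤ)^(ℓ-1) * (a j (n - ℓ*m) : ℤ) else 0) := by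
      intro ℓ hℓ
      rw [Finset.mem_Icc] at hℓ
      simp only [mul_ite, mul_zero]
      rw [helperA n ℓ hℓ.1 (fun k => (-1:ℤ)^(ℓ-1) * (a j (n-k):ℤ)),
        helperB n ℓ hℓ.1 (fun m => (-1:ℤ)^(ℓ-1) * (a j (n - ℓ*m):ℤ))]
    rw [Finset.sum_congr rfl h1, Finset.sum_comm]
    refine Finset.sum_congr rfl fun m hm => ?_
    rw [Finset.mem_Icc] at hm
    have hcomm : ∀ x ∈ Icc 1 n,
        (if x * m ≤ n then (-1:ℤ)^(x-1) * (a j (n - x*m):ℤ) else 0)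
        = (if m * x ≤ n then (-1:ℤ)^(x-1) * (a j (n - x*m):ℤ) else 0) :=
      fun x _ => if_congr (by rw [Nat.mul_comm]) rfl rfl
    rw [Finset.sum_congr rfl hcomm,
      ← helperB n m hm.1 (fun ℓ => (-1:ℤ)^(ℓ-1) * (a j (n - ℓ*m):ℤ))]
  have hT2 : (∑ ℓ ∈ Icc 1 n, ∑ k ∈ Icc 1 n, (-1:ℤ)^(ℓ-1) * (if ℓ * j = k then (a j (n-k):ℤ) else 0))
      = ∑ ℓ ∈ Icc 1 (n / j), (-1:ℤ)^(ℓ-1) * (a j (n - ℓ*j) : ℤ) := by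
    have h1 : ∀ ℓ ∈ Icc 1 n,
        (∑ k ∈ Icc 1 n, (-1:ℤ)^(ℓ-1) * (if ℓ * j = k then (a j (n-k):ℤ) else 0))
        = if j * ℓ ≤ n then (-1:ℤ)^(ℓ-1) * (a j (n - ℓ*j) : ℤ) else 0 := by
      intro ℓ hℓ
      rw [Finset.mem_Icc] at hℓ
      simp only [mul_ite, mul_zero]
      rw [Finset.sum_ite_eq (Icc 1 n) (ℓ * j) (fun k => (-1:ℤ)^(ℓ-1) * (a j (n-k):ℤ))]
      have hiff : (ℓ * j ∈ Icc 1 n) ↔ (j * ℓ ≤ n) := by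
        rw [Finset.mem_Icc, Nat.mul_comm]
        constructor
        · exact fun h => h.2
        · intro h; exact ⟨by nlinarith [hℓ.1, hj], h⟩
      exact if_congr hiff rfl rfl
    rw [Finset.sum_congr rfl h1, ← helperB n j hj (fun ℓ => (-1:ℤ)^(ℓ-1) * (a j (n - ℓ*j):ℤ))]
  rw [hT1, hT2]
  have hbc : ∀ m ∈ Icc 1 n, m ≠ j →
      (∑ ℓ ∈ Icc 1 (n / m), (-1:ℤ)^(ℓ-1) * (a j (n - ℓ*m) : ℤ)) = (b j m n : ℤ) := by
    intro m hm hmj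
    rw [Finset.mem_Icc] at hm
    exact (b_closed j m hm.1 hmj n).symm
  have hansum : (a j n : ℤ) = ∑ m ∈ Icc 1 n, (b j m n : ℤ) := by
    rw [a_eq_sum_b j n hn]
    push_cast
    rfl
  by_cases hjn : j ≤ n
  · have hjmem : j ∈ Icc 1 n := Finset.mem_Icc.mpr ⟨hj, hjn⟩
    rw [hansum, ← Finset.add_sum_erase _ (fun m => (b j m n : ℤ)) hjmem,
      ← Finset.add_sum_erase _ (fun m => ∑ ℓ ∈ Icc 1 (n/m), (-1:ℤ)^(ℓ-1) * (a j (n - ℓ*m):ℤ)) hjmem]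
    rw [b_j_eq_zero]
    rw [Finset.sum_congr rfl
      (fun m hm => hbc m (Finset.mem_of_mem_erase hm) (Finset.ne_of_mem_erase hm))]
    push_cast
    ring
  · have hz : n / j = 0 := Nat.div_eq_of_lt (by omega)
    rw [hz, show Icc 1 0 = (∅ : Finset ℕ) from rfl, Finset.sum_empty, sub_zero, hansum]
    exact Finset.sum_congr rfl (fun m hm => hbc m hm (by rw [Finset.mem_Icc] at hm; omega))

end CarlitzAux

/-- The formal power series
`σ_j(X) = ∑_{ℓ ≥ 1} (-1)^{ℓ-1} (X^ℓ/(1-X^ℓ) - X^{ℓ j})`, where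
`X^ℓ/(1-X^ℓ)` stands for `∑_{m ≥ 1} X^{ℓ m}`.  The coefficient of `X^n`
receives the contribution `(-1)^{ℓ-1}` from `X^ℓ/(1-X^ℓ)` exactly when
`ℓ ∣ n`, and the contribution `-(-1)^{ℓ-1}` from `X^{ℓ j}` exactly when
`ℓ * j = n`; only the finitely many `ℓ` with `1 ≤ ℓ ≤ n` contribute. -/
noncomputable def sigmaJPS (j : ℕ) : PowerSeries ℤ :=
  PowerSeries.mk fun n =>
    ∑ ℓ ∈ Finset.Icc 1 n,
      (-1 : ℤ) ^ (ℓ - 1) *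
        ((if ℓ ∣ n then 1 else 0) - (if ℓ * j = n then 1 else 0))

/-- The generating function `C_j(z) = ∑_{n ≥ 0} a_{n,j} z^n` of the numbers of
Carlitz compositions avoiding the part `j` satisfies
`(1 - σ_j(X)) · C_j(X) = 1`, i.e. `C_j(X) = 1/(1 - σ_j(X))`. -/
theorem carlitz_avoid_generating_function (j : ℕ) (hj : 1 ≤ j) :
    (1 - sigmaJPS j) * PowerSeries.mk (fun n => (carlitzCountAvoid n j : ℤ)) = 1 := by
  ext n
  rw [sub_mul, one_mul, map_sub, PowerSeries.coeff_mul]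
  simp only [sigmaJPS, PowerSeries.coeff_mk, CarlitzAux.carlitzCountAvoid_eq]
  cases n with
  | zero =>
    simp [CarlitzAux.a_zero]
  | succ m =>
    rw [PowerSeries.coeff_one, if_neg (by omega : ¬ (m + 1 = 0))]
    rw [Finset.Nat.sum_antidiagonal_eq_sum_range_succ_mk, Finset.sum_range_succ']
    have hzero : (∑ ℓ ∈ Finset.Icc 1 0, (-1 : ℤ) ^ (ℓ - 1) *
        ((if ℓ ∣ 0 then (1:ℤ) else 0) - (if ℓ * j = 0 then (1:ℤ) else 0)))
          * (CarlitzAux.a j (m + 1 - 0) : ℤ) = 0 := by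
      simp
    rw [hzero, add_zero]
    have hrange : ∀ (F : ℕ → ℤ),
        ∑ k ∈ Finset.Icc 1 (m+1), F k = ∑ k ∈ Finset.range (m+1), F (k+1) := by
      intro F
      rw [← Finset.Ico_add_one_right_eq_Icc, Finset.sum_Ico_eq_sum_range]
      exact Finset.sum_congr rfl fun i _ => by rw [Nat.add_comm]
    have hkey := CarlitzAux.key j hj (m+1) (by omega)
    rw [hrange] at hkey
    rw [← hkey]
    ring
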